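/- For every n, the Johnson graph J(n,2) is a Tinhofer graph: Tinhofer's individualization-refinement algorithm gives the correct isomorphism answer on input (J(n,2), H) for every graph H and all possible choices of individualized vertices. -/

import Mathlib

namespace ColorRef

variable {V W : Type}

/-- `crRel G c i u v` means vertices `u` and `v` get the same color in round `i`
of color refinement on `G` with initial coloring `c`. -/
def crRel (G : SimpleGraph V) {α : Type} (c : V → α) : ℕ → V → V → Prop
  | 0 => fun u v => c u = c v
  | (i + 1) => fun u v => crRel G c i u v ∧
      ∀ w : V, {a : V | G.Adj u a ∧ crRel G c i a w}.ncard =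
               {a : V | G.Adj v a ∧ crRel G c i a w}.ncard

/-- `u` and `v` get the same color in the stable coloring. -/
def stableRel (G : SimpleGraph V) {α : Type} (c : V → α) (u v : V) : Prop :=
  ∀ i : ℕ, crRel G c i u v

/-- `X` is a cell of the stable partition of `(G, c)`. -/
def IsCell (G : SimpleGraph V) {α : Type} (c : V → α) (X : Set V) : Prop :=
  ∃ u : V, X = {v : V | stableRel G c u v}

/-- The multisets of round-`i` colors on the two sides of the disjoint union `G ⊕g H`
coincide for every `i`, i.e. color refinement does not distinguish `G` and `H`. -/
def crIndist (G : SimpleGraph V) (cG : V → ℕ) (H : SimpleGraph W) (cH : W → ℕ) : Prop :=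
  ∀ (i : ℕ) (w : V ⊕ W),
    {u : V | crRel (G ⊕g H) (Sum.elim cG cH) i (Sum.inl u) w}.ncard =
    {v : W | crRel (G ⊕g H) (Sum.elim cG cH) i (Sum.inr v) w}.ncard

/-- `G` (with coloring `cG`) is amenable: any finite colored graph `H` that color
refinement fails to distinguish from `G` is color-preservingly isomorphic to `G`. -/
def Amenable (G : SimpleGraph V) (cG : V → ℕ) : Prop :=
  ∀ (W : Type) (_ : Fintype W) (H : SimpleGraph W) (cH : W → ℕ),
    crIndist G cG H cH → ∃ φ : G ≃g H, ∀ v : V, cH (φ v) = cG v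

/-! ### Induced subgraphs on cells and between cells -/

def CellEmpty (G : SimpleGraph V) (X : Set V) : Prop := ∀ u ∈ X, ∀ v ∈ X, ¬ G.Adj u v

def CellComplete (G : SimpleGraph V) (X : Set V) : Prop :=
  ∀ u ∈ X, ∀ v ∈ X, u ≠ v → G.Adj u v

/-- `G[X]` is a perfect matching `mK₂` on `X`. -/
def CellMatching (G : SimpleGraph V) (X : Set V) : Prop :=
  ∀ u ∈ X, {v : V | v ∈ X ∧ G.Adj u v}.ncard = 1

/-- `G[X]` is the complement of a perfect matching on `X`. -/
def CellCoMatching (G : SimpleGraph V) (X : Set V) : Prop :=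
  ∀ u ∈ X, {v : V | v ∈ X ∧ v ≠ u ∧ ¬ G.Adj u v}.ncard = 1

/-- `G[X]` is the 5-cycle (a 2-regular graph on 5 vertices). -/
def CellC5 (G : SimpleGraph V) (X : Set V) : Prop :=
  X.ncard = 5 ∧ ∀ u ∈ X, {v : V | v ∈ X ∧ G.Adj u v}.ncard = 2

/-- Condition A. -/
def CondA (G : SimpleGraph V) {α : Type} (c : V → α) : Prop :=
  ∀ X : Set V, IsCell G c X →
    CellEmpty G X ∨ CellComplete G X ∨ CellMatching G X ∨ CellCoMatching G X ∨ CellC5 G X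

def BipEmpty (G : SimpleGraph V) (X Y : Set V) : Prop := ∀ u ∈ X, ∀ v ∈ Y, ¬ G.Adj u v

def BipComplete (G : SimpleGraph V) (X Y : Set V) : Prop := ∀ u ∈ X, ∀ v ∈ Y, G.Adj u v

/-- `G[X,Y]` is a disjoint union of stars `sK_{1,t}` with centers `X` and leaves `Y`. -/
def BipStars (G : SimpleGraph V) (X Y : Set V) : Prop :=
  (∀ v ∈ Y, {u : V | u ∈ X ∧ G.Adj u v}.ncard = 1) ∧
  (∃ t : ℕ, ∀ u ∈ X, {v : V | v ∈ Y ∧ G.Adj u v}.ncard = t)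

/-- `G[X,Y]` is the bipartite complement of a disjoint union of stars with centers `X`. -/
def BipCoStars (G : SimpleGraph V) (X Y : Set V) : Prop :=
  (∀ v ∈ Y, {u : V | u ∈ X ∧ ¬ G.Adj u v}.ncard = 1) ∧
  (∃ t : ℕ, ∀ u ∈ X, {v : V | v ∈ Y ∧ ¬ G.Adj u v}.ncard = t)

/-- Condition B. -/
def CondB (G : SimpleGraph V) {α : Type} (c : V → α) : Prop :=
  ∀ X Y : Set V, IsCell G c X → IsCell G c Y → X ≠ Y →
    BipEmpty G X Y ∨ BipComplete G X Y ∨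
    BipStars G X Y ∨ BipStars G Y X ∨ BipCoStars G X Y ∨ BipCoStars G Y X

/-- A cell is heterogeneous if the graph it induces is neither complete nor empty. -/
def Hetero (G : SimpleGraph V) (X : Set V) : Prop :=
  ¬ CellEmpty G X ∧ ¬ CellComplete G X

/-- `{X, Y}` is an anisotropic edge of the cell graph. -/
def AnisoEdge (G : SimpleGraph V) {α : Type} (c : V → α) (X Y : Set V) : Prop :=
  IsCell G c X ∧ IsCell G c Y ∧ X ≠ Y ∧ ¬ BipEmpty G X Y ∧ ¬ BipComplete G X Y

/-- An anisotropic path in the cell graph, given as the list of its cells. -/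
def AnisoPath (G : SimpleGraph V) {α : Type} (c : V → α) (L : List (Set V)) : Prop :=
  (∀ X ∈ L, IsCell G c X) ∧ L.Nodup ∧ L.Chain' (AnisoEdge G c)

/-- Condition C: no uniform anisotropic path connects two heterogeneous cells. -/
def CondC (G : SimpleGraph V) {α : Type} (c : V → α) : Prop :=
  ¬ ∃ (X Y : Set V) (L : List (Set V)) (k : ℕ),
      AnisoPath G c (X :: (L ++ [Y])) ∧
      (∀ Z ∈ X :: (L ++ [Y]), Z.ncard = k) ∧
      Hetero G X ∧ Hetero G Y

/-- Condition D: the cell graph has no uniform anisotropic cycle. -/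
def CondD (G : SimpleGraph V) {α : Type} (c : V → α) : Prop :=
  ¬ ∃ (X : Set V) (L : List (Set V)) (k : ℕ),
      3 ≤ (X :: L).length ∧
      AnisoPath G c (X :: L) ∧
      List.Chain' (AnisoEdge G c) ((X :: L) ++ [X]) ∧
      (∀ Z ∈ X :: L, Z.ncard = k)

/-- Condition E: no anisotropic path `X Y₁ … Y_l Z` with `|X| < |Y₁| = … = |Y_l| > |Z|`
and no anisotropic cycle `X Y₁ … Y_l X` with `|X| < |Y₁| = … = |Y_l|`. -/
def CondE (G : SimpleGraph V) {α : Type} (c : V → α) : Prop :=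
  (¬ ∃ (X Z : Set V) (Ys : List (Set V)) (k : ℕ),
      Ys ≠ [] ∧
      AnisoPath G c (X :: (Ys ++ [Z])) ∧
      (∀ Y ∈ Ys, Y.ncard = k) ∧ X.ncard < k ∧ Z.ncard < k) ∧
  (¬ ∃ (X : Set V) (Ys : List (Set V)) (k : ℕ),
      2 ≤ Ys.length ∧
      AnisoPath G c (X :: Ys) ∧
      List.Chain' (AnisoEdge G c) ((X :: Ys) ++ [X]) ∧
      (∀ Y ∈ Ys, Y.ncard = k) ∧ X.ncard < k)

/-- Condition F: no anisotropic path `X Y₁ … Y_l` with `|X| < |Y₁| = … = |Y_l|`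
whose last cell `Y_l` is heterogeneous. -/
def CondF (G : SimpleGraph V) {α : Type} (c : V → α) : Prop :=
  ¬ ∃ (X : Set V) (Ys : List (Set V)) (Yl : Set V) (k : ℕ),
      Ys ≠ [] ∧
      AnisoPath G c (X :: Ys) ∧
      (∀ Y ∈ Ys, Y.ncard = k) ∧ X.ncard < k ∧
      Ys.getLast? = some Yl ∧ Hetero G Yl

/-- The type of cells of the stable partition. -/
def Cell (G : SimpleGraph V) {α : Type} (c : V → α) : Type := {X : Set V // IsCell G c X}

/-- The graph on the cells of `Π_G` formed by the anisotropic edges of the cell graph;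
its connected components are the anisotropic components of `C(G)`. -/
def anisoGraph (G : SimpleGraph V) {α : Type} (c : V → α) : SimpleGraph (Cell G c) where
  Adj A B := AnisoEdge G c A.val B.val
  symm := by
    constructor
    rintro A B ⟨h1, h2, h3, h4, h5⟩
    refine ⟨h2, h1, Ne.symm h3, fun h => h4 ?_, fun h => h5 ?_⟩
    · exact fun u hu v hv hadj => h v hv u hu hadj.symm
    · exact fun u hu v hv => (h v hv u hu).symm
  loopless := ⟨fun A h => h.2.2.1 rfl⟩

/-- Condition G: every anisotropic component is a tree, and rooting it at any cell `R`
of minimum cardinality in its component, `|X| ≤ |Y|` along edges directed away from `R`. -/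
def CondG (G : SimpleGraph V) {α : Type} (c : V → α) : Prop :=
  (anisoGraph G c).IsAcyclic ∧
  ∀ R X Y : Cell G c,
    (∀ Z : Cell G c, (anisoGraph G c).Reachable R Z → R.val.ncard ≤ Z.val.ncard) →
    (anisoGraph G c).Reachable R X →
    (anisoGraph G c).Adj X Y →
    (anisoGraph G c).dist R Y = (anisoGraph G c).dist R X + 1 →
    X.val.ncard ≤ Y.val.ncard

/-- Condition H: every anisotropic component contains at most one heterogeneous cell,
and such a cell has minimum cardinality within its component. -/
def CondH (G : SimpleGraph V) {α : Type} (c : V → α) : Prop :=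
  (∀ X Y : Cell G c, Hetero G X.val → Hetero G Y.val →
      (anisoGraph G c).Reachable X Y → X = Y) ∧
  (∀ X Z : Cell G c, Hetero G X.val →
      (anisoGraph G c).Reachable X Z → X.val.ncard ≤ Z.val.ncard)

/-! ### Matrices, fractional automorphisms and compactness -/

open Classical in
/-- The real adjacency matrix of `G`. -/
noncomputable def adjMat (G : SimpleGraph V) : Matrix V V ℝ :=
  Matrix.of fun u v => if G.Adj u v then (1 : ℝ) else 0

open Classical in
/-- The permutation matrix of a permutation `σ`. -/
noncomputable def permMat (σ : Equiv.Perm V) : Matrix V V ℝ :=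
  Matrix.of fun i j => if σ j = i then (1 : ℝ) else 0

def IsDoublyStochastic [Fintype V] (X : Matrix V V ℝ) : Prop :=
  (∀ i j, 0 ≤ X i j) ∧ (∀ i, ∑ j, X i j = 1) ∧ (∀ j, ∑ i, X i j = 1)

def IsAutomorphism (G : SimpleGraph V) (σ : Equiv.Perm V) : Prop :=
  ∀ u v : V, G.Adj (σ u) (σ v) ↔ G.Adj u v

/-- `X` is a convex combination of permutation matrices of automorphisms of `G`. -/
def IsConvexCombOfAut [Fintype V] (G : SimpleGraph V) (X : Matrix V V ℝ) : Prop :=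
  ∃ (s : Finset (Equiv.Perm V)) (w : Equiv.Perm V → ℝ),
    (∀ σ ∈ s, IsAutomorphism G σ) ∧ (∀ σ ∈ s, 0 ≤ w σ) ∧
    (∑ σ ∈ s, w σ) = 1 ∧ X = ∑ σ ∈ s, w σ • permMat σ

/-- `G` is compact: the polytope of fractional automorphisms of `G` is the convex hull
of the permutation matrices of automorphisms of `G`. -/
def CompactGraph [Fintype V] (G : SimpleGraph V) : Prop :=
  ∀ X : Matrix V V ℝ, IsDoublyStochastic X → adjMat G * X = X * adjMat G →
    IsConvexCombOfAut G X

/-! ### Equitable partitions, Godsil, Tinhofer, refinable, discrete, unigraphs -/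

/-- The partition given by the classes of the equivalence `r` is equitable. -/
def Equitable (G : SimpleGraph V) (r : V → V → Prop) : Prop :=
  ∀ u v w : V, r u v →
    {a : V | G.Adj u a ∧ r a w}.ncard = {a : V | G.Adj v a ∧ r a w}.ncard

/-- The partition given by `r` is the orbit partition of a subgroup of `Aut(G)`. -/
def IsOrbitPartition (G : SimpleGraph V) (r : V → V → Prop) : Prop :=
  ∃ S : Subgroup (Equiv.Perm V), (∀ σ ∈ S, IsAutomorphism G σ) ∧
    (∀ u v : V, r u v ↔ ∃ σ ∈ S, σ u = v)

/-- `G` is a Godsil graph. -/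
def Godsil (G : SimpleGraph V) : Prop :=
  ∀ r : V → V → Prop, Equivalence r → Equitable G r → IsOrbitPartition G r

open Classical in
/-- The coloring of the disjoint union after individualizing the pairs in `F`:
the `j`-th individualized pair gets fresh color `some j`, all other vertices keep
their (uniform) original color `none`. -/
noncomputable def tinColor (F : List (V × W)) : V ⊕ W → Option ℕ
  | Sum.inl u => F.findIdx? (fun p => decide (p.1 = u))
  | Sum.inr v => F.findIdx? (fun p => decide (p.2 = v))

/-- The stable coloring relation on `G ⊕g H` after individualizing the pairs in `F`. -/
def tinRel (G : SimpleGraph V) (H : SimpleGraph W) (F : List (V × W)) :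
    (V ⊕ W) → (V ⊕ W) → Prop :=
  stableRel (G ⊕g H) (tinColor F)

/-- The multisets of stable colors on the two sides agree after individualizing `F`. -/
def tinIndist (G : SimpleGraph V) (H : SimpleGraph W) (F : List (V × W)) : Prop :=
  ∀ w : V ⊕ W,
    {u : V | tinRel G H F (Sum.inl u) w}.ncard =
    {v : W | tinRel G H F (Sum.inr v) w}.ncard

/-- The pair `p` is a legal individualization choice at the stage reached after `F`. -/
def ValidStep (G : SimpleGraph V) (H : SimpleGraph W) (F : List (V × W)) (p : V × W) : Prop :=
  tinIndist G H F ∧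
  tinRel G H F (Sum.inl p.1) (Sum.inr p.2) ∧
  2 ≤ {u' : V | tinRel G H F (Sum.inl u') (Sum.inl p.1)}.ncard ∧
  2 ≤ {v' : W | tinRel G H F (Sum.inr v') (Sum.inr p.2)}.ncard

/-- `F` is a legal sequence of individualization choices of Tinhofer's algorithm. -/
def ValidRun (G : SimpleGraph V) (H : SimpleGraph W) (F : List (V × W)) : Prop :=
  ∀ j : Fin F.length, ValidStep G H (F.take j.val) (F.get j)

/-- After `F`, all stable color classes are singletons in `G` and in `H`. -/
def AllSingletons (G : SimpleGraph V) (H : SimpleGraph W) (F : List (V × W)) : Prop :=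
  (∀ u u' : V, tinRel G H F (Sum.inl u) (Sum.inl u') → u = u') ∧
  (∀ v v' : W, tinRel G H F (Sum.inr v) (Sum.inr v') → v = v')

/-- After `F`, Tinhofer's algorithm stops. -/
def TinTerminal (G : SimpleGraph V) (H : SimpleGraph W) (F : List (V × W)) : Prop :=
  ¬ tinIndist G H F ∨ AllSingletons G H F

/-- After `F`, Tinhofer's algorithm outputs "isomorphic": the color multisets agree,
all classes are singletons, and the color-matching map is an isomorphism. -/
def TinOutputIso (G : SimpleGraph V) (H : SimpleGraph W) (F : List (V × W)) : Prop :=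
  tinIndist G H F ∧ AllSingletons G H F ∧
  (∀ (u u' : V) (v v' : W), tinRel G H F (Sum.inl u) (Sum.inr v) →
     tinRel G H F (Sum.inl u') (Sum.inr v') → (G.Adj u u' ↔ H.Adj v v'))

/-- `G` is a Tinhofer graph: for every finite `H` and every legal complete run of
Tinhofer's individualization-refinement algorithm, the output is correct. -/
def Tinhofer (G : SimpleGraph V) : Prop :=
  ∀ (W : Type) (_ : Fintype W) (H : SimpleGraph W) (F : List (V × W)),
    ValidRun G H F → TinTerminal G H F →
    (TinOutputIso G H F ↔ Nonempty (G ≃g H))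

/-- `G` is refinable: its stable partition is the orbit partition of `Aut(G)`. -/
def Refinable (G : SimpleGraph V) : Prop :=
  ∀ u v : V, stableRel G (fun _ => (0 : ℕ)) u v ↔
    ∃ σ : Equiv.Perm V, IsAutomorphism G σ ∧ σ u = v

/-- `G` is discrete: the stable partition consists of singletons. -/
def Discrete (G : SimpleGraph V) : Prop :=
  ∀ u v : V, stableRel G (fun _ => (0 : ℕ)) u v → u = v

/-- `G` is a unigraph: it is determined up to isomorphism by its degree sequence. -/
def Unigraph (G : SimpleGraph V) : Prop :=
  ∀ (W : Type) (_ : Fintype W) (H : SimpleGraph W),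
    (∃ e : V ≃ W, ∀ v : V, {w : W | H.Adj (e v) w}.ncard = {u : V | G.Adj v u}.ncard) →
    Nonempty (G ≃g H)

/-! ### Concrete graphs -/

/-- The cycle graph on `n` vertices. -/
def cycleG (n : ℕ) : SimpleGraph (Fin n) :=
  SimpleGraph.fromRel (fun u v => (u.val + 1) % n = v.val)

/-- The Petersen graph as the Kneser graph `K(5,2)`. -/
def petersen : SimpleGraph {s : Finset (Fin 5) // s.card = 2} where
  Adj a b := Disjoint a.val b.val
  symm := ⟨fun _ _ h => h.symm⟩
  loopless := by
    constructor
    intro a h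
    have h' : Disjoint a.val a.val := h
    rw [disjoint_self] at h'
    have h2 := a.2
    rw [h'] at h2
    simp at h2

/-- The Johnson graph `J(n,2)`. -/
def johnson (n : ℕ) : SimpleGraph {s : Finset (Fin n) // s.card = 2} where
  Adj a b := (a.val ∩ b.val).card = 1
  symm := by
    constructor
    intro a b h
    have h' : (a.val ∩ b.val).card = 1 := h
    show (b.val ∩ a.val).card = 1
    rwa [Finset.inter_comm]
  loopless := by
    constructor
    intro a h
    have h' : (a.val ∩ a.val).card = 1 := h
    rw [Finset.inter_self, a.2] at h'
    omega

/-- The cell (as an element of the cell type) containing vertex `u`. -/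
def vcell (G : SimpleGraph V) {α : Type} (c : V → α) (u : V) : Cell G c :=
  ⟨{v : V | stableRel G c u v}, ⟨u, rfl⟩⟩

/-- `u` and `v` lie in cells of the same anisotropic component. -/
def SameAnisoComp (G : SimpleGraph V) {α : Type} (c : V → α) (u v : V) : Prop :=
  (anisoGraph G c).Reachable (vcell G c u) (vcell G c v)

/-! ### Auxiliary development for Statement 18 -/

section CRBasic

variable {X α : Type} {U : SimpleGraph X} {c : X → α}

lemma crRel_refl : ∀ (i : ℕ) (u : X), crRel U c i u u
  | 0, _ => rfl
  | (i+1), u => ⟨crRel_refl i u, fun _ => rfl⟩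

lemma crRel_symm : ∀ {i : ℕ} {u v : X}, crRel U c i u v → crRel U c i v u
  | 0, _, _, h => h.symm
  | (_+1), _, _, h => ⟨crRel_symm h.1, fun w => (h.2 w).symm⟩

lemma crRel_trans : ∀ {i : ℕ} {u v w : X}, crRel U c i u v → crRel U c i v w → crRel U c i u w
  | 0, _, _, _, h, h' => h.trans h'
  | (_+1), _, _, _, h, h' => ⟨crRel_trans h.1 h'.1, fun w => (h.2 w).trans (h'.2 w)⟩

lemma crRel_of_le {u v : X} {i j : ℕ} (hij : i ≤ j) : crRel U c j u v → crRel U c i u v := by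
  induction hij with
  | refl => exact id
  | step _ ih => exact fun h => ih h.1

/-- counting into a set closed under round-`i` colors -/
lemma crRel_count_closed_aux [Fintype X] {i : ℕ} :
    ∀ (n : ℕ) (D : Set X), D.ncard ≤ n →
      (∀ a ∈ D, ∀ b, crRel U c i a b → b ∈ D) →
      ∀ {u v : X}, crRel U c (i+1) u v →
      {a | U.Adj u a ∧ a ∈ D}.ncard = {a | U.Adj v a ∧ a ∈ D}.ncard := by
  intro n
  induction n with
  | zero =>
    intro D hcard _ u v _
    have hD : D = ∅ := by
      have h0 : D.ncard = 0 := Nat.le_zero.mp hcard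
      exact (Set.ncard_eq_zero (Set.toFinite D)).mp h0
    subst hD
    simp
  | succ n ih =>
    intro D hcard hcl u v huv
    rcases Set.eq_empty_or_nonempty D with rfl | ⟨w, hw⟩
    · simp
    · set Dw : Set X := {a | crRel U c i a w} with hDwdef
      have hsub : Dw ⊆ D := fun a ha => hcl w hw a (crRel_symm ha)
      have hwD : w ∈ Dw := crRel_refl i w
      set D' : Set X := D \ Dw with hD'def
      have hcl' : ∀ a ∈ D', ∀ b, crRel U c i a b → b ∈ D' := by
        rintro a ⟨haD, haw⟩ b hab
        exact ⟨hcl a haD b hab, fun hbw => haw (crRel_trans hab hbw)⟩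
      have hlt : D'.ncard ≤ n := by
        have h1 : D'.ncard < D.ncard :=
          Set.ncard_lt_ncard ⟨Set.diff_subset, fun hs => (hs (hsub hwD)).2 hwD⟩ (Set.toFinite D)
        omega
      have hsplit : ∀ x : X,
          {a | U.Adj x a ∧ a ∈ D} = {a | U.Adj x a ∧ a ∈ Dw} ∪ {a | U.Adj x a ∧ a ∈ D'} := by
        intro x
        ext a
        simp only [Set.mem_setOf_eq, Set.mem_union, hD'def, Set.mem_diff]
        constructor
        · rintro ⟨h1, h2⟩
          by_cases h3 : a ∈ Dw
          · exact Or.inl ⟨h1, h3⟩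
          · exact Or.inr ⟨h1, h2, h3⟩
        · rintro (⟨h1, h2⟩ | ⟨h1, h2, _⟩)
          · exact ⟨h1, hsub h2⟩
          · exact ⟨h1, h2⟩
      have hdisj : ∀ x : X,
          Disjoint {a | U.Adj x a ∧ a ∈ Dw} {a | U.Adj x a ∧ a ∈ D'} := by
        intro x
        rw [Set.disjoint_iff]
        rintro a ⟨⟨_, h2⟩, ⟨_, h4⟩⟩
        exact absurd h2 h4.2
      have hu := Set.ncard_union_eq (hdisj u) (Set.toFinite _) (Set.toFinite _)
      have hv := Set.ncard_union_eq (hdisj v) (Set.toFinite _) (Set.toFinite _)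
      rw [hsplit u, hsplit v, hu, hv]
      have e1 : {a | U.Adj u a ∧ a ∈ Dw}.ncard = {a | U.Adj v a ∧ a ∈ Dw}.ncard := huv.2 w
      have e2 : {a | U.Adj u a ∧ a ∈ D'}.ncard = {a | U.Adj v a ∧ a ∈ D'}.ncard :=
        ih D' hlt hcl' huv
      omega

lemma crRel_count_closed [Fintype X] {i : ℕ} {u v : X} (huv : crRel U c (i+1) u v)
    (D : Set X) (hcl : ∀ a ∈ D, ∀ b, crRel U c i a b → b ∈ D) :
    {a | U.Adj u a ∧ a ∈ D}.ncard = {a | U.Adj v a ∧ a ∈ D}.ncard :=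
  crRel_count_closed_aux D.ncard D le_rfl hcl huv

/-- a color-preserving automorphism relates every vertex to its image -/
lemma crRel_equiv_self (Θ : X ≃ X) (hA : ∀ a b, U.Adj (Θ a) (Θ b) ↔ U.Adj a b)
    (hc : ∀ a, c (Θ a) = c a) : ∀ (i : ℕ) (a : X), crRel U c i a (Θ a) := by
  intro i
  induction i with
  | zero => exact fun a => (hc a).symm
  | succ i ih =>
    intro a
    refine ⟨ih a, fun w => ?_⟩
    have hset : {b | U.Adj (Θ a) b ∧ crRel U c i b w}
        = Θ '' {b | U.Adj a b ∧ crRel U c i b w} := by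
      ext b
      simp only [Set.mem_setOf_eq, Set.mem_image]
      constructor
      · rintro ⟨h1, h2⟩
        refine ⟨Θ.symm b, ⟨?_, ?_⟩, Θ.apply_symm_apply b⟩
        · rw [← hA]
          rwa [Θ.apply_symm_apply]
        · have h3 := ih (Θ.symm b)
          rw [Θ.apply_symm_apply] at h3
          exact crRel_trans h3 h2
      · rintro ⟨b', ⟨h1, h2⟩, rfl⟩
        exact ⟨(hA a b').mpr h1, crRel_trans (crRel_symm (ih b')) h2⟩
    rw [hset, Set.ncard_image_of_injective _ Θ.injective]

lemma crRel_congr_succ {i j : ℕ} (h : ∀ u v : X, crRel U c i u v ↔ crRel U c j u v) :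
    ∀ u v : X, crRel U c (i+1) u v ↔ crRel U c (j+1) u v := by
  intro u v
  have hset : ∀ (x w : X),
      {a | U.Adj x a ∧ crRel U c i a w} = {a | U.Adj x a ∧ crRel U c j a w} := by
    intro x w
    ext a
    simp only [Set.mem_setOf_eq]
    rw [h]
  constructor
  · rintro ⟨h1, h2⟩
    exact ⟨(h u v).mp h1, fun w => by rw [← hset, ← hset]; exact h2 w⟩
  · rintro ⟨h1, h2⟩
    exact ⟨(h u v).mpr h1, fun w => by rw [hset, hset]; exact h2 w⟩

lemma stableRel_eq_crRel [Fintype X] (U : SimpleGraph X) (c : X → α) :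
    ∃ N : ℕ, ∀ u v : X, stableRel U c u v ↔ crRel U c N u v := by
  classical
  set s : ℕ → Set (X × X) := fun i => {p | crRel U c i p.1 p.2} with hs
  have hmono : ∀ i, s (i+1) ⊆ s i := fun i p hp => hp.1
  have key : ∃ N, s (N+1) = s N := by
    by_contra hno
    push_neg at hno
    have hlt : ∀ i, (s (i+1)).ncard < (s i).ncard := fun i =>
      Set.ncard_lt_ncard (ssubset_of_subset_of_ne (hmono i) (hno i)) (Set.toFinite _)
    have hsum : ∀ i, (s i).ncard + i ≤ (s 0).ncard := by
      intro i
      induction i with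
      | zero => simp
      | succ i ih => have := hlt i; omega
    have := hsum ((s 0).ncard + 1)
    omega
  obtain ⟨N, hN⟩ := key
  have base : ∀ u v : X, crRel U c (N+1) u v ↔ crRel U c N u v := by
    intro u v
    exact Set.ext_iff.mp hN (u, v)
  have heq : ∀ j, N ≤ j → ∀ u v : X, crRel U c j u v ↔ crRel U c N u v := by
    intro j hj
    induction hj with
    | refl => exact fun _ _ => Iff.rfl
    | @step j _ ih =>
      intro u v
      have h1 := crRel_congr_succ (U := U) (c := c) ih u v
      exact h1.trans (base u v)
  refine ⟨N, fun u v => ⟨fun h => h N, fun h i => ?_⟩⟩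
  rcases le_total i N with hi | hi
  · exact crRel_of_le hi h
  · exact (heq i hi u v).mpr h

end CRBasic
section ListAux

variable {β : Type}

lemma findIdx?_go_cons' (p : β → Bool) (a : β) (l : List β) (i : ℕ) :
    List.findIdx?.go p (a :: l) i = if p a then some i else List.findIdx?.go p l (i+1) := rfl

lemma findIdx?_congr' (p q : β → Bool) :
    ∀ (l : List β), (∀ x ∈ l, p x = q x) → ∀ i, List.findIdx?.go p l i = List.findIdx?.go q l i
  | [], _, _ => rfl
  | (a :: l), h, i => by
    rw [findIdx?_go_cons', findIdx?_go_cons', h a (List.mem_cons_self)]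
    by_cases hq : q a = true
    · simp [hq]
    · simp only [Bool.not_eq_true] at hq
      simp only [hq]
      simp only [Bool.false_eq_true, if_false]
      exact findIdx?_congr' p q l (fun x hx => h x (List.mem_cons_of_mem a hx)) (i+1)

lemma findIdx?_ge (p : β → Bool) :
    ∀ (l : List β) (i m : ℕ), List.findIdx?.go p l i = some m → i ≤ m
  | [], i, m, h => by simp [List.findIdx?.go] at h
  | a :: l, i, m, h => by
    rw [findIdx?_go_cons'] at h
    by_cases hp : p a = true
    · simp [hp] at h
      omega
    · simp only [Bool.not_eq_true] at hp
      simp only [hp, Bool.false_eq_true, if_false] at h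
      have := findIdx?_ge p l (i+1) m h
      omega

lemma findIdx?_some_mem (p q : β → Bool) :
    ∀ (l : List β) (i m : ℕ), List.findIdx?.go p l i = some m → List.findIdx?.go q l i = some m →
      ∃ x ∈ l, p x = true ∧ q x = true
  | [], i, m, h, _ => by simp [List.findIdx?.go] at h
  | a :: l, i, m, hp, hq => by
    rw [findIdx?_go_cons'] at hp hq
    by_cases h1 : p a = true
    · by_cases h2 : q a = true
      · exact ⟨a, List.mem_cons_self, h1, h2⟩
      · simp only [Bool.not_eq_true] at h2
        simp only [h1, if_true] at hp
        simp only [h2, Bool.false_eq_true, if_false] at hq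
        have := findIdx?_ge q l (i+1) m hq
        have : m = i := by injection hp with h; omega
        omega
    · by_cases h2 : q a = true
      · simp only [Bool.not_eq_true] at h1
        simp only [h2, if_true] at hq
        simp only [h1, Bool.false_eq_true, if_false] at hp
        have := findIdx?_ge p l (i+1) m hp
        have : m = i := by injection hq with h; omega
        omega
      · simp only [Bool.not_eq_true] at h1 h2
        simp only [h1, h2, Bool.false_eq_true, if_false] at hp hq
        obtain ⟨x, hx, h⟩ := findIdx?_some_mem p q l (i+1) m hp hq
        exact ⟨x, List.mem_cons_of_mem a hx, h⟩

lemma findIdx?_eq_none_iff (p : β → Bool) :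
    ∀ (l : List β) (i : ℕ), List.findIdx?.go p l i = none ↔ ∀ x ∈ l, ¬ p x = true
  | [], i => by simp [List.findIdx?.go]
  | a :: l, i => by
    rw [findIdx?_go_cons']
    by_cases hp : p a = true
    · simp [hp]
    · simp only [Bool.not_eq_true] at hp
      simp only [hp, Bool.false_eq_true, if_false]
      rw [findIdx?_eq_none_iff p l (i+1)]
      constructor
      · intro h x hx
        rcases List.mem_cons.mp hx with rfl | hx'
        · simp [hp]
        · exact h x hx'
      · intro h x hx
        exact h x (List.mem_cons_of_mem a hx)

end ListAux

section TinColorAux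

variable {V W : Type}

lemma tinColor_inl_some_inj {F : List (V × W)} {u u' : V} {m : ℕ}
    (h : tinColor F (Sum.inl u) = some m) (h' : tinColor F (Sum.inl u') = some m) :
    u = u' := by
  classical
  unfold tinColor at h h'
  obtain ⟨x, _, hx, hx'⟩ := findIdx?_some_mem _ _ F 0 m h h'
  have hx2 := of_decide_eq_true hx
  have hx2' := of_decide_eq_true hx'
  rw [← hx2, ← hx2']

lemma tinColor_inl_none_iff {F : List (V × W)} {u : V} :
    tinColor F (Sum.inl u) = none ↔ ∀ p ∈ F, p.1 ≠ u := by
  unfold tinColor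
  show List.findIdx?.go _ F 0 = none ↔ _
  rw [findIdx?_eq_none_iff]
  simp

lemma tinColor_inl_mem_some {F : List (V × W)} {p : V × W} (hp : p ∈ F) :
    ∃ m, tinColor F (Sum.inl p.1) = some m := by
  cases h : tinColor F (Sum.inl p.1) with
  | none => exact absurd rfl (tinColor_inl_none_iff.mp h p hp)
  | some m => exact ⟨m, rfl⟩

lemma tinColor_inl_eq_cases {F : List (V × W)} {u u' : V}
    (h : tinColor F (Sum.inl u) = tinColor F (Sum.inl u')) :
    u = u' ∨ ((∀ p ∈ F, p.1 ≠ u) ∧ (∀ p ∈ F, p.1 ≠ u')) := by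
  cases hu : tinColor F (Sum.inl u) with
  | none =>
    rw [hu] at h
    exact Or.inr ⟨tinColor_inl_none_iff.mp hu, tinColor_inl_none_iff.mp h.symm⟩
  | some m =>
    rw [hu] at h
    exact Or.inl (tinColor_inl_some_inj hu h.symm)

end TinColorAux

section IsoSwap

variable {V W : Type} {G : SimpleGraph V} {H : SimpleGraph W}

/-- the involution of the disjoint union induced by an isomorphism -/
def isoSwap (ψ : G ≃g H) : (V ⊕ W) ≃ (V ⊕ W) where
  toFun := Sum.elim (fun u => Sum.inr (ψ u)) (fun v => Sum.inl (ψ.symm v))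
  invFun := Sum.elim (fun u => Sum.inr (ψ u)) (fun v => Sum.inl (ψ.symm v))
  left_inv := by rintro (u | v) <;> simp
  right_inv := by rintro (u | v) <;> simp

@[simp] lemma isoSwap_inl (ψ : G ≃g H) (u : V) : isoSwap ψ (Sum.inl u) = Sum.inr (ψ u) := rfl
@[simp] lemma isoSwap_inr (ψ : G ≃g H) (v : W) :
    isoSwap ψ (Sum.inr v) = Sum.inl (ψ.symm v) := rfl

lemma isoSwap_adj (ψ : G ≃g H) :
    ∀ a b, (G ⊕g H).Adj (isoSwap ψ a) (isoSwap ψ b) ↔ (G ⊕g H).Adj a b := by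
  rintro (u | v) (u' | v') <;>
    simp [SimpleGraph.sum_adj, ψ.map_adj_iff, ψ.symm.map_adj_iff]

lemma isoSwap_color (ψ : G ≃g H) {F : List (V × W)} (hψ : ∀ p ∈ F, ψ p.1 = p.2) :
    ∀ a, tinColor F (isoSwap ψ a) = tinColor F a := by
  classical
  rintro (u | v)
  · show tinColor F (Sum.inr (ψ u)) = tinColor F (Sum.inl u)
    unfold tinColor
    refine findIdx?_congr' _ _ F ?_ 0
    intro x hx
    show decide (x.2 = ψ u) = decide (x.1 = u)
    rw [decide_eq_decide]
    constructor
    · intro h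
      exact ψ.toEquiv.injective (by show ψ x.1 = ψ u; rw [hψ x hx, h])
    · rintro rfl
      exact (hψ x hx).symm
  · show tinColor F (Sum.inl (ψ.symm v)) = tinColor F (Sum.inr v)
    unfold tinColor
    refine findIdx?_congr' _ _ F ?_ 0
    intro x hx
    show decide (x.1 = ψ.symm v) = decide (x.2 = v)
    rw [decide_eq_decide]
    constructor
    · intro h
      rw [← hψ x hx, h]
      simp
    · rintro rfl
      rw [← hψ x hx]
      simp

/-- every vertex is `crRel`-related to its `isoSwap` image -/
lemma crRel_isoSwap (ψ : G ≃g H) {F : List (V × W)} (hψ : ∀ p ∈ F, ψ p.1 = p.2) :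
    ∀ (i : ℕ) (a : V ⊕ W), crRel (G ⊕g H) (tinColor F) i a (isoSwap ψ a) :=
  crRel_equiv_self (isoSwap ψ) (isoSwap_adj ψ) (isoSwap_color ψ hψ)

lemma inv_tinIndist (ψ : G ≃g H) {F : List (V × W)} (hψ : ∀ p ∈ F, ψ p.1 = p.2) :
    tinIndist G H F := by
  intro w
  have key := crRel_isoSwap ψ hψ
  have himg : {v : W | tinRel G H F (Sum.inr v) w}
      = (fun u => ψ u) '' {u : V | tinRel G H F (Sum.inl u) w} := by
    ext v
    simp only [Set.mem_image, Set.mem_setOf_eq]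
    constructor
    · intro hv
      refine ⟨ψ.symm v, fun i => ?_, ψ.apply_symm_apply v⟩
      have h1 := key i (Sum.inr v)
      rw [isoSwap_inr] at h1
      exact crRel_trans (crRel_symm h1) (hv i)
    · rintro ⟨u, hu, rfl⟩
      intro i
      have h1 := key i (Sum.inl u)
      rw [isoSwap_inl] at h1
      exact crRel_trans (crRel_symm h1) (hu i)
  rw [himg]
  exact (Set.ncard_image_of_injective _ (fun a b h => ψ.toEquiv.injective h)).symm

end IsoSwap

section SumCount

variable {V W α : Type} {G : SimpleGraph V} {H : SimpleGraph W}

lemma inl_adj_count (u : V) (P : V ⊕ W → Prop) :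
    {a | (G ⊕g H).Adj (Sum.inl u) a ∧ P a}.ncard
      = {r : V | G.Adj u r ∧ P (Sum.inl r)}.ncard := by
  have himg : {a | (G ⊕g H).Adj (Sum.inl u) a ∧ P a}
      = Sum.inl '' {r : V | G.Adj u r ∧ P (Sum.inl r)} := by
    ext a
    cases a with
    | inl r => simp [SimpleGraph.sum_adj]
    | inr s => simp [SimpleGraph.sum_adj]
  rw [himg, Set.ncard_image_of_injective _ Sum.inl_injective]

lemma inr_adj_count (v : W) (P : V ⊕ W → Prop) :
    {a | (G ⊕g H).Adj (Sum.inr v) a ∧ P a}.ncard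
      = {r : W | H.Adj v r ∧ P (Sum.inr r)}.ncard := by
  have himg : {a | (G ⊕g H).Adj (Sum.inr v) a ∧ P a}
      = Sum.inr '' {r : W | H.Adj v r ∧ P (Sum.inr r)} := by
    ext a
    cases a with
    | inl r => simp [SimpleGraph.sum_adj]
    | inr s => simp [SimpleGraph.sum_adj]
  rw [himg, Set.ncard_image_of_injective _ Sum.inr_injective]

end SumCount
section Generic2

variable {V W : Type} [Fintype V] [Fintype W] {G : SimpleGraph V} {H : SimpleGraph W}

lemma tinRel_refl {F : List (V × W)} (a : V ⊕ W) : tinRel G H F a a :=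
  fun i => crRel_refl i a

lemma tinRel_symm {F : List (V × W)} {a b : V ⊕ W} (h : tinRel G H F a b) : tinRel G H F b a :=
  fun i => crRel_symm (h i)

lemma tinRel_trans {F : List (V × W)} {a b c : V ⊕ W}
    (h : tinRel G H F a b) (h' : tinRel G H F b c) : tinRel G H F a c :=
  fun i => crRel_trans (h i) (h' i)

lemma output_of_indist_singletons {F : List (V × W)}
    (h1 : tinIndist G H F) (h2 : AllSingletons G H F) : TinOutputIso G H F := by
  classical
  refine ⟨h1, h2, ?_⟩
  intro u u' v v' huv huv'
  obtain ⟨N, hN⟩ := stableRel_eq_crRel (G ⊕g H) (tinColor F)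
  have hcount := (huv (N+1)).2 (Sum.inl u')
  rw [inl_adj_count, inr_adj_count] at hcount
  have hL : {r : V | G.Adj u r ∧ crRel (G ⊕g H) (tinColor F) N (Sum.inl r) (Sum.inl u')}.ncard
      = if G.Adj u u' then 1 else 0 := by
    by_cases h : G.Adj u u'
    · rw [if_pos h]
      have hset : {r : V | G.Adj u r ∧ crRel (G ⊕g H) (tinColor F) N (Sum.inl r) (Sum.inl u')}
          = {u'} := by
        ext r
        simp only [Set.mem_setOf_eq, Set.mem_singleton_iff]
        constructor
        · rintro ⟨_, h3⟩
          exact h2.1 r u' ((hN _ _).mpr h3)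
        · rintro rfl
          exact ⟨h, (hN _ _).mp (tinRel_refl _)⟩
      rw [hset, Set.ncard_singleton]
    · rw [if_neg h]
      have hset : {r : V | G.Adj u r ∧ crRel (G ⊕g H) (tinColor F) N (Sum.inl r) (Sum.inl u')}
          = ∅ := by
        ext r
        simp only [Set.mem_setOf_eq, Set.mem_empty_iff_false, iff_false, not_and]
        intro h1' h3
        have := h2.1 r u' ((hN _ _).mpr h3)
        subst this
        exact h h1'
      rw [hset, Set.ncard_empty]
  have hR : {r : W | H.Adj v r ∧ crRel (G ⊕g H) (tinColor F) N (Sum.inr r) (Sum.inl u')}.ncard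
      = if H.Adj v v' then 1 else 0 := by
    by_cases h : H.Adj v v'
    · rw [if_pos h]
      have hset : {r : W | H.Adj v r ∧ crRel (G ⊕g H) (tinColor F) N (Sum.inr r) (Sum.inl u')}
          = {v'} := by
        ext r
        simp only [Set.mem_setOf_eq, Set.mem_singleton_iff]
        constructor
        · rintro ⟨_, h3⟩
          exact h2.2 r v' (tinRel_trans ((hN _ _).mpr h3) huv')
        · rintro rfl
          exact ⟨h, (hN _ _).mp (tinRel_symm huv')⟩
      rw [hset, Set.ncard_singleton]
    · rw [if_neg h]
      have hset : {r : W | H.Adj v r ∧ crRel (G ⊕g H) (tinColor F) N (Sum.inr r) (Sum.inl u')}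
          = ∅ := by
        ext r
        simp only [Set.mem_setOf_eq, Set.mem_empty_iff_false, iff_false, not_and]
        intro h1' h3
        have := h2.2 r v' (tinRel_trans ((hN _ _).mpr h3) huv')
        subst this
        exact h h1'
      rw [hset, Set.ncard_empty]
  rw [hL, hR] at hcount
  by_cases hG : G.Adj u u' <;> by_cases hH : H.Adj v v' <;> simp_all

lemma iso_of_output {F : List (V × W)} (h : TinOutputIso G H F) : Nonempty (G ≃g H) := by
  classical
  obtain ⟨h1, h2, h3⟩ := h
  have hex : ∀ u : V, ∃ v : W, tinRel G H F (Sum.inl u) (Sum.inr v) := by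
    intro u
    have h0 := h1 (Sum.inl u)
    have hLset : {u' : V | tinRel G H F (Sum.inl u') (Sum.inl u)} = {u} := by
      ext u'
      simp only [Set.mem_setOf_eq, Set.mem_singleton_iff]
      exact ⟨fun h' => h2.1 u' u h', fun h' => h' ▸ tinRel_refl _⟩
    rw [hLset, Set.ncard_singleton] at h0
    obtain ⟨v, hv⟩ := Set.ncard_eq_one.mp h0.symm
    have hvmem : v ∈ {v : W | tinRel G H F (Sum.inr v) (Sum.inl u)} := by rw [hv]; rfl
    exact ⟨v, tinRel_symm hvmem⟩
  choose e he using hex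
  have hinj : Function.Injective e := by
    intro a b hab
    have hb := he b
    rw [← hab] at hb
    exact h2.1 a b (tinRel_trans (he a) (tinRel_symm hb))
  have hsurj : Function.Surjective e := by
    intro v
    have h0 := h1 (Sum.inr v)
    have hRset : {v' : W | tinRel G H F (Sum.inr v') (Sum.inr v)} = {v} := by
      ext v'
      simp only [Set.mem_setOf_eq, Set.mem_singleton_iff]
      exact ⟨fun h' => h2.2 v' v h', fun h' => h' ▸ tinRel_refl _⟩
    rw [hRset, Set.ncard_singleton] at h0
    obtain ⟨u, hu⟩ := Set.ncard_eq_one.mp h0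
    have hmem : u ∈ {u : V | tinRel G H F (Sum.inl u) (Sum.inr v)} := by rw [hu]; rfl
    exact ⟨u, h2.2 (e u) v (tinRel_trans (tinRel_symm (he u)) hmem)⟩
  refine ⟨⟨Equiv.ofBijective e ⟨hinj, hsurj⟩, ?_⟩⟩
  intro a b
  show H.Adj (e a) (e b) ↔ G.Adj a b
  exact (h3 a b (e a) (e b) (he a) (he b)).symm

end Generic2
section JohnsonBasic

/-- vertex type of the Johnson graph -/
abbrev JVert (n : ℕ) : Type := {s : Finset (Fin n) // s.card = 2}

variable {n : ℕ}

lemma johnson_adj {a b : JVert n} : (johnson n).Adj a b ↔ (a.1 ∩ b.1).card = 1 := Iff.rfl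

lemma inter_card_le (a b : JVert n) : (a.1 ∩ b.1).card ≤ 2 := by
  calc (a.1 ∩ b.1).card ≤ a.1.card := Finset.card_le_card Finset.inter_subset_left
  _ = 2 := a.2

lemma inter_card_eq_two_iff {a b : JVert n} : (a.1 ∩ b.1).card = 2 ↔ a = b := by
  constructor
  · intro h
    have h1 : a.1 ∩ b.1 = a.1 :=
      Finset.eq_of_subset_of_card_le Finset.inter_subset_left (by rw [h, a.2])
    have h2 : a.1 ∩ b.1 = b.1 :=
      Finset.eq_of_subset_of_card_le Finset.inter_subset_right (by rw [h, b.2])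
    exact Subtype.ext (h1.symm.trans h2)
  · rintro rfl
    rw [Finset.inter_self, a.2]

lemma pair_card {x y : Fin n} (h : x ≠ y) : ({x, y} : Finset (Fin n)).card = 2 := by
  rw [Finset.card_insert_of_notMem (by simp [h]), Finset.card_singleton]

lemma pair_inter_left {x b d : Fin n} (hbx : b ≠ x) (hbd : b ≠ d) :
    ({x, b} : Finset (Fin n)) ∩ {x, d} = {x} := by
  ext t
  simp only [Finset.mem_inter, Finset.mem_insert, Finset.mem_singleton]
  constructor
  · rintro ⟨(rfl | rfl), (h2 | h2)⟩
    · rfl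
    · rfl
    · exact absurd h2 hbx
    · exact absurd h2 hbd
  · rintro rfl
    exact ⟨Or.inl rfl, Or.inl rfl⟩

lemma eq_pair_of_mem {s : Finset (Fin n)} (hs : s.card = 2) {a b : Fin n}
    (ha : a ∈ s) (hb : b ∈ s) (hab : a ≠ b) : s = {a, b} := by
  refine (Finset.eq_of_subset_of_card_le ?_ ?_).symm
  · intro t ht
    rcases Finset.mem_insert.mp ht with rfl | ht'
    · exact ha
    · rw [Finset.mem_singleton.mp ht']
      exact hb
  · rw [pair_card hab, hs]

lemma pair_inter_card (x y : Fin n) (hxy : x ≠ y) (s : Finset (Fin n)) :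
    (({x, y} : Finset (Fin n)) ∩ s).card
      = (if x ∈ s then 1 else 0) + (if y ∈ s then 1 else 0) := by
  classical
  by_cases hx : x ∈ s <;> by_cases hy : y ∈ s
  · have h : ({x, y} : Finset (Fin n)) ∩ s = {x, y} :=
      Finset.inter_eq_left.mpr (by
        intro t ht
        rcases Finset.mem_insert.mp ht with rfl | ht'
        · exact hx
        · rw [Finset.mem_singleton.mp ht']; exact hy)
    rw [h, pair_card hxy]
    simp [hx, hy]
  · have h : ({x, y} : Finset (Fin n)) ∩ s = {x} := by
      ext t
      simp only [Finset.mem_inter, Finset.mem_insert, Finset.mem_singleton]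
      constructor
      · rintro ⟨(rfl | rfl), h2⟩
        · rfl
        · exact absurd h2 hy
      · rintro rfl
        exact ⟨Or.inl rfl, hx⟩
    rw [h]
    simp [hx, hy]
  · have h : ({x, y} : Finset (Fin n)) ∩ s = {y} := by
      ext t
      simp only [Finset.mem_inter, Finset.mem_insert, Finset.mem_singleton]
      constructor
      · rintro ⟨(rfl | rfl), h2⟩
        · exact absurd h2 hx
        · rfl
      · rintro rfl
        exact ⟨Or.inr rfl, hy⟩
    rw [h]
    simp [hx, hy]
  · have h : ({x, y} : Finset (Fin n)) ∩ s = ∅ := by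
      ext t
      simp only [Finset.mem_inter, Finset.mem_insert, Finset.mem_singleton,
        Finset.notMem_empty, iff_false, not_and]
      rintro (rfl | rfl)
      · exact hx
      · exact hy
    rw [h]
    simp [hx, hy]

/-- lift a permutation of the ground set to the Johnson graph -/
def liftPerm (σ : Equiv.Perm (Fin n)) : Equiv.Perm (JVert n) where
  toFun s := ⟨s.1.image σ, by rw [Finset.card_image_of_injective _ σ.injective, s.2]⟩
  invFun s := ⟨s.1.image σ.symm, by rw [Finset.card_image_of_injective _ σ.symm.injective, s.2]⟩
  left_inv s := by
    apply Subtype.ext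
    show (s.1.image σ).image σ.symm = s.1
    rw [Finset.image_image]
    simp
  right_inv s := by
    apply Subtype.ext
    show (s.1.image σ.symm).image σ = s.1
    rw [Finset.image_image]
    simp

lemma liftPerm_apply (σ : Equiv.Perm (Fin n)) (s : JVert n) :
    (liftPerm σ s).1 = s.1.image σ := rfl

lemma liftPerm_auto (σ : Equiv.Perm (Fin n)) : IsAutomorphism (johnson n) (liftPerm σ) := by
  intro a b
  show ((a.1.image σ) ∩ (b.1.image σ)).card = 1 ↔ (a.1 ∩ b.1).card = 1
  rw [← Finset.image_inter _ _ σ.injective, Finset.card_image_of_injective _ σ.injective]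

lemma liftPerm_fix (σ : Equiv.Perm (Fin n)) (s : JVert n)
    (h : ∀ i, i ∈ s.1 → σ i ∈ s.1) : liftPerm σ s = s := by
  apply Subtype.ext
  show s.1.image σ = s.1
  apply Finset.eq_of_subset_of_card_le
  · intro t ht
    obtain ⟨i, hi, rfl⟩ := Finset.mem_image.mp ht
    exact h i hi
  · rw [Finset.card_image_of_injective _ σ.injective]

lemma swap_auto {u v : JVert n} (hdisj : u.1 ∩ v.1 = ∅) (huniv : u.1 ∪ v.1 = Finset.univ) :
    IsAutomorphism (johnson n) (Equiv.swap u v) := by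
  classical
  have hne : u ≠ v := by
    intro h
    rw [h, Finset.inter_self] at hdisj
    have := v.2
    rw [hdisj] at this
    simp at this
  have hfact : ∀ r : JVert n, r ≠ u → r ≠ v →
      ((r.1 ∩ u.1).card = 1 ∧ (r.1 ∩ v.1).card = 1) := by
    intro r hru hrv
    have hsum : (r.1 ∩ u.1).card + (r.1 ∩ v.1).card = 2 := by
      rw [← Finset.card_union_of_disjoint (by
        rw [Finset.disjoint_left]
        intro t ht hts
        have : t ∈ u.1 ∩ v.1 := Finset.mem_inter.mpr
          ⟨(Finset.mem_inter.mp ht).2, (Finset.mem_inter.mp hts).2⟩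
        rw [hdisj] at this
        exact absurd this (Finset.notMem_empty t))]
      have h1 : (r.1 ∩ u.1) ∪ (r.1 ∩ v.1) = r.1 := by
        rw [← Finset.inter_union_distrib_left, huniv, Finset.inter_univ]
      rw [h1, r.2]
    have h1 : (r.1 ∩ u.1).card ≠ 2 := fun h => hru (inter_card_eq_two_iff.mp h)
    have h2 : (r.1 ∩ v.1).card ≠ 2 := fun h => hrv (inter_card_eq_two_iff.mp h)
    omega
  have hadj_uv : ∀ r : JVert n, r ≠ u → r ≠ v →
      ((johnson n).Adj u r ∧ (johnson n).Adj v r) := by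
    intro r hru hrv
    obtain ⟨h1, h2⟩ := hfact r hru hrv
    constructor
    · show (u.1 ∩ r.1).card = 1
      rwa [Finset.inter_comm]
    · show (v.1 ∩ r.1).card = 1
      rwa [Finset.inter_comm]
  intro a b
  rcases eq_or_ne a u with ha | hau
  · rcases eq_or_ne b u with hb | hbu
    · rw [ha, hb]
      simp
    · rcases eq_or_ne b v with hb | hbv
      · rw [ha, hb, Equiv.swap_apply_left, Equiv.swap_apply_right]
        exact (johnson n).adj_comm v u
      · rw [ha, Equiv.swap_apply_left, Equiv.swap_apply_of_ne_of_ne hbu hbv]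
        exact iff_of_true (hadj_uv b hbu hbv).2 (hadj_uv b hbu hbv).1
  · rcases eq_or_ne a v with ha | hav
    · rcases eq_or_ne b u with hb | hbu
      · rw [ha, hb, Equiv.swap_apply_right, Equiv.swap_apply_left]
        exact (johnson n).adj_comm u v
      · rcases eq_or_ne b v with hb | hbv
        · rw [ha, hb]
          simp
        · rw [ha, Equiv.swap_apply_right, Equiv.swap_apply_of_ne_of_ne hbu hbv]
          exact iff_of_true (hadj_uv b hbu hbv).1 (hadj_uv b hbu hbv).2
    · rcases eq_or_ne b u with hb | hbu
      · rw [hb, Equiv.swap_apply_of_ne_of_ne hau hav, Equiv.swap_apply_left]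
        exact iff_of_true ((hadj_uv a hau hav).2).symm ((hadj_uv a hau hav).1).symm
      · rcases eq_or_ne b v with hb | hbv
        · rw [hb, Equiv.swap_apply_of_ne_of_ne hau hav, Equiv.swap_apply_right]
          exact iff_of_true ((hadj_uv a hau hav).1).symm ((hadj_uv a hau hav).2).symm
        · rw [Equiv.swap_apply_of_ne_of_ne hau hav, Equiv.swap_apply_of_ne_of_ne hbu hbv]

end JohnsonBasic
section JohnsonCount

variable {n : ℕ} {W : Type} [Fintype W] {H : SimpleGraph W}

open Classical in
lemma inl_count_indiv {F : List (JVert n × W)} {S : JVert n} {m : ℕ}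
    (hmS : tinColor F (Sum.inl S) = some m) (x : JVert n) :
    {a | (johnson n ⊕g H).Adj (Sum.inl x) a ∧
        crRel (johnson n ⊕g H) (tinColor F) 0 a (Sum.inl S)}.ncard
      = if (johnson n).Adj x S then 1 else 0 := by
  classical
  rw [inl_adj_count]
  have hset : {r : JVert n | (johnson n).Adj x r ∧
      crRel (johnson n ⊕g H) (tinColor F) 0 (Sum.inl r) (Sum.inl S)}
      = if (johnson n).Adj x S then {S} else ∅ := by
    by_cases hx : (johnson n).Adj x S
    · rw [if_pos hx]
      ext r
      simp only [Set.mem_setOf_eq, Set.mem_singleton_iff]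
      constructor
      · rintro ⟨_, hc⟩
        have hc' : tinColor F (Sum.inl r) = tinColor F (Sum.inl S) := hc
        exact tinColor_inl_some_inj (hc'.trans hmS) hmS
      · rintro rfl
        exact ⟨hx, rfl⟩
    · rw [if_neg hx]
      ext r
      simp only [Set.mem_setOf_eq, Set.mem_empty_iff_false, iff_false, not_and]
      intro h1 hc
      have hc' : tinColor F (Sum.inl r) = tinColor F (Sum.inl S) := hc
      have hrS := tinColor_inl_some_inj (hc'.trans hmS) hmS
      subst hrS
      exact hx h1
  rw [hset]
  by_cases hx : (johnson n).Adj x S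
  · rw [if_pos hx, if_pos hx, Set.ncard_singleton]
  · rw [if_neg hx, if_neg hx, Set.ncard_empty]

lemma crRel1_adj_transfer {F : List (JVert n × W)} {u v : JVert n}
    (h : crRel (johnson n ⊕g H) (tinColor F) 1 (Sum.inl u) (Sum.inl v))
    {p : JVert n × W} (hp : p ∈ F) :
    ((johnson n).Adj u p.1 ↔ (johnson n).Adj v p.1) := by
  classical
  obtain ⟨m, hm⟩ := tinColor_inl_mem_some hp
  have hcount := h.2 (Sum.inl p.1)
  rw [inl_count_indiv hm u, inl_count_indiv hm v] at hcount
  by_cases h1 : (johnson n).Adj u p.1 <;> by_cases h2 : (johnson n).Adj v p.1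
  · exact iff_of_true h1 h2
  · rw [if_pos h1, if_neg h2] at hcount
    exact absurd hcount (by norm_num)
  · rw [if_neg h1, if_pos h2] at hcount
    exact absurd hcount (by norm_num)
  · exact iff_of_false h1 h2

lemma config_contra {F : List (JVert n × W)} {u v : JVert n}
    (h2 : crRel (johnson n ⊕g H) (tinColor F) 2 (Sum.inl u) (Sum.inl v))
    (hpF : ∀ p ∈ F, p.1 ≠ u ∧ p.1 ≠ v)
    {S T : JVert n} (hS : ∃ p ∈ F, p.1 = S) (hT : ∃ p ∈ F, p.1 = T)
    {z A B w0 : Fin n}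
    (hSv : S.1 = {z, A}) (hTv : T.1 = {z, B})
    (hAB : A ≠ B) (hzA : z ≠ A) (hzB : z ≠ B)
    (hwz : w0 ≠ z) (hwA : w0 ≠ A) (hwB : w0 ≠ B)
    (hu : u.1 = {z, w0}) (hv : v.1 = {A, B}) :
    ∃ σ : Equiv.Perm (JVert n), IsAutomorphism (johnson n) σ ∧
      (∀ p ∈ F, σ p.1 = p.1) ∧ σ u = v := by
  classical
  obtain ⟨mS, hmS⟩ : ∃ m, tinColor F (Sum.inl S) = some m := by
    obtain ⟨p, hp, hpS⟩ := hS
    obtain ⟨m, hm⟩ := tinColor_inl_mem_some hp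
    exact ⟨m, by rwa [hpS] at hm⟩
  obtain ⟨mT, hmT⟩ : ∃ m, tinColor F (Sum.inl T) = some m := by
    obtain ⟨p, hp, hpT⟩ := hT
    obtain ⟨m, hm⟩ := tinColor_inl_mem_some hp
    exact ⟨m, by rwa [hpT] at hm⟩
  by_cases hext : ∃ e : Fin n, e ∉ ({z, A, B, w0} : Finset (Fin n))
  · exfalso
    obtain ⟨e, he⟩ := hext
    simp only [Finset.mem_insert, Finset.mem_singleton, not_or] at he
    obtain ⟨hez, heA, heB, hew⟩ := he
    set U := johnson n ⊕g H
    set c := tinColor F with hc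
    set D' : Set (JVert n ⊕ W) := {x | c x ≠ c (Sum.inl S) ∧ c x ≠ c (Sum.inl T) ∧
      {a | U.Adj x a ∧ crRel U c 0 a (Sum.inl S)}.ncard = 1 ∧
      {a | U.Adj x a ∧ crRel U c 0 a (Sum.inl T)}.ncard = 1} with hD'
    have hclosed : ∀ a ∈ D', ∀ b, crRel U c 1 a b → b ∈ D' := by
      rintro a ⟨ha1, ha2, ha3, ha4⟩ b hab
      have hcol : c a = c b := hab.1
      refine ⟨by rwa [← hcol], by rwa [← hcol], ?_, ?_⟩
      · rw [← hab.2 (Sum.inl S)]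
        exact ha3
      · rw [← hab.2 (Sum.inl T)]
        exact ha4
    have hmem : ∀ r : JVert n, (Sum.inl r ∈ D') ↔
        (r ≠ S ∧ r ≠ T ∧ (johnson n).Adj r S ∧ (johnson n).Adj r T) := by
      intro r
      simp only [hD', Set.mem_setOf_eq]
      rw [inl_count_indiv (H := H) hmS r, inl_count_indiv (H := H) hmT r]
      constructor
      · rintro ⟨h1, h2, h3, h4⟩
        refine ⟨fun hr => h1 (by rw [hr]), fun hr => h2 (by rw [hr]), ?_, ?_⟩
        · by_contra hadj
          rw [if_neg hadj] at h3
          exact absurd h3 (by norm_num)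
        · by_contra hadj
          rw [if_neg hadj] at h4
          exact absurd h4 (by norm_num)
      · rintro ⟨h1, h2, h3, h4⟩
        refine ⟨?_, ?_, by rw [if_pos h3], by rw [if_pos h4]⟩
        · intro hcc
          exact h1 (tinColor_inl_some_inj (hcc.trans hmS) hmS)
        · intro hcc
          exact h2 (tinColor_inl_some_inj (hcc.trans hmT) hmT)
    have hcnt := crRel_count_closed (U := U) (c := c) h2 D' hclosed
    -- the left set is nonempty
    have hzA' : A ≠ z := Ne.symm hzA
    have hzB' : B ≠ z := Ne.symm hzB
    set r0 : JVert n := ⟨{z, e}, pair_card (Ne.symm hez)⟩ with hr0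
    have hr0S : r0 ≠ S := by
      intro hr
      have : e ∈ S.1 := by
        rw [← hr]
        simp [hr0]
      rw [hSv] at this
      simp only [Finset.mem_insert, Finset.mem_singleton] at this
      rcases this with h | h
      · exact hez h
      · exact heA h
    have hr0T : r0 ≠ T := by
      intro hr
      have : e ∈ T.1 := by
        rw [← hr]
        simp [hr0]
      rw [hTv] at this
      simp only [Finset.mem_insert, Finset.mem_singleton] at this
      rcases this with h | h
      · exact hez h
      · exact heB h
    have hr0adjS : (johnson n).Adj r0 S := by
      show (r0.1 ∩ S.1).card = 1
      rw [hr0, hSv]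
      show (({z, e} : Finset (Fin n)) ∩ {z, A}).card = 1
      rw [pair_inter_left hez heA, Finset.card_singleton]
    have hr0adjT : (johnson n).Adj r0 T := by
      show (r0.1 ∩ T.1).card = 1
      rw [hr0, hTv]
      show (({z, e} : Finset (Fin n)) ∩ {z, B}).card = 1
      rw [pair_inter_left hez heB, Finset.card_singleton]
    have hur0 : U.Adj (Sum.inl u) (Sum.inl r0) := by
      show (johnson n).Adj u r0
      show (u.1 ∩ r0.1).card = 1
      rw [hu, hr0]
      show (({z, w0} : Finset (Fin n)) ∩ {z, e}).card = 1
      rw [pair_inter_left hwz (fun h => hew h.symm), Finset.card_singleton]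
    have hpos : 0 < {a | U.Adj (Sum.inl u) a ∧ a ∈ D'}.ncard := by
      rw [Set.ncard_pos (Set.toFinite _)]
      exact ⟨Sum.inl r0, hur0, (hmem r0).mpr ⟨hr0S, hr0T, hr0adjS, hr0adjT⟩⟩
    have hzero : {a | U.Adj (Sum.inl v) a ∧ a ∈ D'} = ∅ := by
      ext a
      simp only [Set.mem_setOf_eq, Set.mem_empty_iff_false, iff_false, not_and]
      intro hadj hD
      cases a with
      | inr s =>
        have : (johnson n ⊕g H).Adj (Sum.inl v) (Sum.inr s) := hadj
        simp [SimpleGraph.sum_adj] at this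
      | inl r =>
        obtain ⟨hrS, hrT, hradjS, hradjT⟩ := (hmem r).mp hD
        have hvr : (johnson n).Adj v r := hadj
        by_cases hzr : z ∈ r.1
        · -- r = {z, e'} with e' ∉ {A, B}; then v ∩ r = ∅
          obtain ⟨c1, c2, hc12, hr12⟩ := Finset.card_eq_two.mp r.2
          have hre : ∃ e' : Fin n, e' ≠ z ∧ r.1 = {z, e'} := by
            rw [hr12] at hzr
            simp only [Finset.mem_insert, Finset.mem_singleton] at hzr
            rcases hzr with rfl | rfl
            · exact ⟨c2, Ne.symm hc12, hr12⟩
            · exact ⟨c1, hc12, by rw [hr12, Finset.pair_comm]⟩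
          obtain ⟨e', he'z, hre'⟩ := hre
          have he'A : e' ≠ A := by
            intro h
            subst h
            have : (r.1 ∩ S.1).card = 2 := by
              rw [hre', hSv, Finset.inter_self]
              exact pair_card hzA
            rw [show (r.1 ∩ S.1).card = 1 from hradjS] at this
            omega
          have he'B : e' ≠ B := by
            intro h
            subst h
            have : (r.1 ∩ T.1).card = 2 := by
              rw [hre', hTv, Finset.inter_self]
              exact pair_card hzB
            rw [show (r.1 ∩ T.1).card = 1 from hradjT] at this
            omega
          have : (v.1 ∩ r.1) = ∅ := by
            rw [hv, hre']
            ext t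
            simp only [Finset.mem_inter, Finset.mem_insert, Finset.mem_singleton,
              Finset.notMem_empty, iff_false, not_and]
            rintro (rfl | rfl) (h | h)
            · exact hzA (h.symm)
            · exact he'A h.symm
            · exact hzB h.symm
            · exact he'B h.symm
          have hvr1 : (v.1 ∩ r.1).card = 1 := hvr
          rw [this] at hvr1
          simp at hvr1
        · -- A ∈ r and B ∈ r, so r = v
          have hAr : A ∈ r.1 := by
            have h1 : (r.1 ∩ S.1).card = 1 := hradjS
            obtain ⟨t, ht⟩ := Finset.card_eq_one.mp h1
            have htm : t ∈ r.1 ∩ S.1 := by rw [ht]; exact Finset.mem_singleton_self t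
            have htr := (Finset.mem_inter.mp htm).1
            have htS := (Finset.mem_inter.mp htm).2
            rw [hSv] at htS
            simp only [Finset.mem_insert, Finset.mem_singleton] at htS
            rcases htS with rfl | rfl
            · exact absurd htr hzr
            · exact htr
          have hBr : B ∈ r.1 := by
            have h1 : (r.1 ∩ T.1).card = 1 := hradjT
            obtain ⟨t, ht⟩ := Finset.card_eq_one.mp h1
            have htm : t ∈ r.1 ∩ T.1 := by rw [ht]; exact Finset.mem_singleton_self t
            have htr := (Finset.mem_inter.mp htm).1
            have htT := (Finset.mem_inter.mp htm).2
            rw [hTv] at htT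
            simp only [Finset.mem_insert, Finset.mem_singleton] at htT
            rcases htT with rfl | rfl
            · exact absurd htr hzr
            · exact htr
          have hrv : r = v := by
            apply Subtype.ext
            rw [hv]
            exact eq_pair_of_mem r.2 hAr hBr hAB
          subst hrv
          exact (johnson n).irrefl hvr
    rw [hcnt, hzero] at hpos
    simp at hpos
  · -- the ground set is {z, A, B, w0}: use the antipodal swap
    push_neg at hext
    have hdisj : u.1 ∩ v.1 = ∅ := by
      rw [hu, hv]
      ext t
      simp only [Finset.mem_inter, Finset.mem_insert, Finset.mem_singleton,
        Finset.notMem_empty, iff_false, not_and]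
      rintro (rfl | rfl) (h | h)
      · exact hzA h
      · exact hzB h
      · exact hwA h
      · exact hwB h
    have huniv : u.1 ∪ v.1 = Finset.univ := by
      apply Finset.eq_univ_of_forall
      intro t
      have := hext t
      simp only [Finset.mem_insert, Finset.mem_singleton] at this
      rw [hu, hv]
      simp only [Finset.mem_union, Finset.mem_insert, Finset.mem_singleton]
      tauto
    refine ⟨Equiv.swap u v, swap_auto hdisj huniv, ?_, Equiv.swap_apply_left u v⟩
    intro p hp
    exact Equiv.swap_apply_of_ne_of_ne (hpF p hp).1 (hpF p hp).2

end JohnsonCount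
section JohnsonStar

variable {n : ℕ} {W : Type} [Fintype W] {H : SimpleGraph W}

lemma ground_perm_case {F : List (JVert n × W)} {x y x' y' : Fin n}
    (hxy : x ≠ y) (hxy' : x' ≠ y')
    (hpx : ∀ p ∈ F, (x ∈ p.1.1 ↔ x' ∈ p.1.1)) (hpy : ∀ p ∈ F, (y ∈ p.1.1 ↔ y' ∈ p.1.1)) :
    ∃ σ : Equiv.Perm (JVert n), IsAutomorphism (johnson n) σ ∧ (∀ p ∈ F, σ p.1 = p.1) ∧
      (σ ⟨{x, y}, pair_card hxy⟩).1 = {x', y'} := by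
  classical
  set τ₁ : Equiv.Perm (Fin n) := if x = x' then Equiv.refl _ else Equiv.swap x x' with hτ₁
  have hτ₁pe : ∀ p ∈ F, ∀ i, (i ∈ p.1.1 ↔ τ₁ i ∈ p.1.1) := by
    intro p hp i
    rw [hτ₁]
    split_ifs with h
    · simp
    · rcases eq_or_ne i x with rfl | hix
      · rw [Equiv.swap_apply_left]
        exact hpx p hp
      · rcases eq_or_ne i x' with rfl | hix'
        · rw [Equiv.swap_apply_right]
          exact (hpx p hp).symm
        · rw [Equiv.swap_apply_of_ne_of_ne hix hix']
  have hτ₁x : τ₁ x = x' := by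
    rw [hτ₁]
    split_ifs with h
    · simpa using h
    · exact Equiv.swap_apply_left x x'
  have hy1y' : ∀ p ∈ F, (τ₁ y ∈ p.1.1 ↔ y' ∈ p.1.1) :=
    fun p hp => ((hτ₁pe p hp y).symm).trans (hpy p hp)
  have hy1x' : τ₁ y ≠ x' := by
    intro hcon
    have : τ₁ y = τ₁ x := by rw [hτ₁x, hcon]
    exact hxy (τ₁.injective this).symm
  set τ₂ : Equiv.Perm (Fin n) := if τ₁ y = y' then Equiv.refl _ else Equiv.swap (τ₁ y) y'
    with hτ₂
  have hτ₂pe : ∀ p ∈ F, ∀ i, (i ∈ p.1.1 ↔ τ₂ i ∈ p.1.1) := by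
    intro p hp i
    rw [hτ₂]
    split_ifs with h
    · simp
    · rcases eq_or_ne i (τ₁ y) with rfl | hiy
      · rw [Equiv.swap_apply_left]
        exact hy1y' p hp
      · rcases eq_or_ne i y' with rfl | hiy'
        · rw [Equiv.swap_apply_right]
          exact (hy1y' p hp).symm
        · rw [Equiv.swap_apply_of_ne_of_ne hiy hiy']
  have hτ₂x' : τ₂ x' = x' := by
    rw [hτ₂]
    split_ifs with h
    · rfl
    · exact Equiv.swap_apply_of_ne_of_ne (Ne.symm hy1x') hxy'
  have hτ₂y : τ₂ (τ₁ y) = y' := by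
    rw [hτ₂]
    split_ifs with h
    · simpa using h
    · exact Equiv.swap_apply_left (τ₁ y) y'
  set σ₀ : Equiv.Perm (Fin n) := τ₁.trans τ₂ with hσ₀
  have hσ₀pe : ∀ p ∈ F, ∀ i, (i ∈ p.1.1 ↔ σ₀ i ∈ p.1.1) := by
    intro p hp i
    exact (hτ₁pe p hp i).trans (hτ₂pe p hp (τ₁ i))
  have hσ₀x : σ₀ x = x' := by
    show τ₂ (τ₁ x) = x'
    rw [hτ₁x, hτ₂x']
  have hσ₀y : σ₀ y = y' := by
    show τ₂ (τ₁ y) = y'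
    rw [hτ₂y]
  refine ⟨liftPerm σ₀, liftPerm_auto σ₀, ?_, ?_⟩
  · intro p hp
    exact liftPerm_fix σ₀ p.1 (fun i hi => (hσ₀pe p hp i).mp hi)
  · show Finset.image σ₀ {x, y} = {x', y'}
    rw [Finset.image_insert, Finset.image_singleton, hσ₀x, hσ₀y]

set_option maxHeartbeats 1000000 in
lemma johnson_star (F : List (JVert n × W)) {u v : JVert n}
    (h : crRel (johnson n ⊕g H) (tinColor F) 2 (Sum.inl u) (Sum.inl v)) :
    ∃ σ : Equiv.Perm (JVert n), IsAutomorphism (johnson n) σ ∧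
      (∀ p ∈ F, σ p.1 = p.1) ∧ σ u = v := by
  classical
  by_cases huv : u = v
  · exact ⟨Equiv.refl _, fun a b => Iff.rfl, fun p _ => rfl, huv⟩
  have hcol : tinColor F (Sum.inl u) = tinColor F (Sum.inl v) := h.1.1
  rcases tinColor_inl_eq_cases hcol with h' | ⟨hFu, hFv⟩
  · exact absurd h' huv
  have hpF : ∀ p ∈ F, p.1 ≠ u ∧ p.1 ≠ v := fun p hp => ⟨hFu p hp, hFv p hp⟩
  have hadj : ∀ p ∈ F, ((johnson n).Adj u p.1 ↔ (johnson n).Adj v p.1) :=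
    fun p hp => crRel1_adj_transfer h.1 hp
  have hcard : ∀ p ∈ F, (u.1 ∩ p.1.1).card = (v.1 ∩ p.1.1).card := by
    intro p hp
    have h1 : (u.1 ∩ p.1.1).card ≤ 2 := inter_card_le u p.1
    have h2 : (v.1 ∩ p.1.1).card ≤ 2 := inter_card_le v p.1
    have h1' : (u.1 ∩ p.1.1).card ≠ 2 := fun hcc =>
      (hpF p hp).1 (inter_card_eq_two_iff.mp hcc).symm
    have h2' : (v.1 ∩ p.1.1).card ≠ 2 := fun hcc =>
      (hpF p hp).2 (inter_card_eq_two_iff.mp hcc).symm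
    have hiff : ((u.1 ∩ p.1.1).card = 1 ↔ (v.1 ∩ p.1.1).card = 1) := hadj p hp
    by_cases hc1 : (u.1 ∩ p.1.1).card = 1
    · rw [hc1, (hiff.mp hc1).symm]
    · have hc2 : ¬(v.1 ∩ p.1.1).card = 1 := fun hcc => hc1 (hiff.mpr hcc)
      omega
  obtain ⟨x, y, hxy, hu⟩ := Finset.card_eq_two.mp u.2
  obtain ⟨x', y', hxy', hv⟩ := Finset.card_eq_two.mp v.2
  have hmemb : ∀ p ∈ F,
      ((x ∈ p.1.1 ∧ y ∉ p.1.1 ∧ x' ∈ p.1.1 ∧ y' ∉ p.1.1)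
      ∨ (x ∈ p.1.1 ∧ y ∉ p.1.1 ∧ x' ∉ p.1.1 ∧ y' ∈ p.1.1)
      ∨ (x ∉ p.1.1 ∧ y ∈ p.1.1 ∧ x' ∈ p.1.1 ∧ y' ∉ p.1.1)
      ∨ (x ∉ p.1.1 ∧ y ∈ p.1.1 ∧ x' ∉ p.1.1 ∧ y' ∈ p.1.1)
      ∨ (x ∉ p.1.1 ∧ y ∉ p.1.1 ∧ x' ∉ p.1.1 ∧ y' ∉ p.1.1)) := by
    intro p hp
    have e1 := pair_inter_card x y hxy p.1.1
    have e2 := pair_inter_card x' y' hxy' p.1.1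
    have e3 := hcard p hp
    rw [hu, hv, e1, e2] at e3
    have hle : (u.1 ∩ p.1.1).card ≤ 1 := by
      have h1 : (u.1 ∩ p.1.1).card ≤ 2 := inter_card_le u p.1
      have h1' : (u.1 ∩ p.1.1).card ≠ 2 := fun hcc =>
        (hpF p hp).1 (inter_card_eq_two_iff.mp hcc).symm
      omega
    rw [hu, e1] at hle
    by_cases h1 : x ∈ p.1.1 <;> by_cases h2 : y ∈ p.1.1 <;>
      by_cases h3 : x' ∈ p.1.1 <;> by_cases h4 : y' ∈ p.1.1 <;>
      simp only [h1, h2, h3, h4, if_true, if_false] at e3 hle <;>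
      first
        | omega
        | tauto
  by_cases hme : (∀ p ∈ F, (x ∈ p.1.1 ↔ x' ∈ p.1.1)) ∧ (∀ p ∈ F, (y ∈ p.1.1 ↔ y' ∈ p.1.1))
  · obtain ⟨σ, hσ1, hσ2, hσ3⟩ := ground_perm_case hxy hxy' hme.1 hme.2
    refine ⟨σ, hσ1, hσ2, ?_⟩
    have hrep : u = ⟨{x, y}, pair_card hxy⟩ := Subtype.ext hu
    rw [hrep]
    exact Subtype.ext (hσ3.trans hv.symm)
  by_cases hme' : (∀ p ∈ F, (x ∈ p.1.1 ↔ y' ∈ p.1.1)) ∧ (∀ p ∈ F, (y ∈ p.1.1 ↔ x' ∈ p.1.1))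
  · obtain ⟨σ, hσ1, hσ2, hσ3⟩ := ground_perm_case (x' := y') (y' := x') hxy (Ne.symm hxy') hme'.1 hme'.2
    refine ⟨σ, hσ1, hσ2, ?_⟩
    have hrep : u = ⟨{x, y}, pair_card hxy⟩ := Subtype.ext hu
    rw [hrep]
    refine Subtype.ext (hσ3.trans ?_)
    rw [hv, Finset.pair_comm]
  -- extraction of the configuration
  have hmix : ∃ p ∈ F, ((x ∈ p.1.1 ∧ y ∉ p.1.1 ∧ x' ∉ p.1.1 ∧ y' ∈ p.1.1)
      ∨ (x ∉ p.1.1 ∧ y ∈ p.1.1 ∧ x' ∈ p.1.1 ∧ y' ∉ p.1.1)) := by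
    have : ¬((∀ p ∈ F, (x ∈ p.1.1 ↔ x' ∈ p.1.1)) ∧ (∀ p ∈ F, (y ∈ p.1.1 ↔ y' ∈ p.1.1))) := hme
    rw [not_and_or] at this
    rcases this with h' | h'
    · obtain ⟨p, hp'⟩ := not_forall.mp h'
      rw [Classical.not_imp] at hp'
      obtain ⟨hp, hiff⟩ := hp'
      refine ⟨p, hp, ?_⟩
      rcases hmemb p hp with hc | hc | hc | hc | hc
      · exact absurd (iff_of_true hc.1 hc.2.2.1) hiff
      · exact Or.inl hc
      · exact Or.inr hc
      · exact absurd (iff_of_false hc.1 hc.2.2.1) hiff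
      · exact absurd (iff_of_false hc.1 hc.2.2.1) hiff
    · obtain ⟨p, hp'⟩ := not_forall.mp h'
      rw [Classical.not_imp] at hp'
      obtain ⟨hp, hiff⟩ := hp'
      refine ⟨p, hp, ?_⟩
      rcases hmemb p hp with hc | hc | hc | hc | hc
      · exact absurd (iff_of_false hc.2.1 hc.2.2.2) hiff
      · exact Or.inl hc
      · exact Or.inr hc
      · exact absurd (iff_of_true hc.2.1 hc.2.2.2) hiff
      · exact absurd (iff_of_false hc.2.1 hc.2.2.2) hiff
  have halign : ∃ p ∈ F, ((x ∈ p.1.1 ∧ y ∉ p.1.1 ∧ x' ∈ p.1.1 ∧ y' ∉ p.1.1)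
      ∨ (x ∉ p.1.1 ∧ y ∈ p.1.1 ∧ x' ∉ p.1.1 ∧ y' ∈ p.1.1)) := by
    have : ¬((∀ p ∈ F, (x ∈ p.1.1 ↔ y' ∈ p.1.1)) ∧ (∀ p ∈ F, (y ∈ p.1.1 ↔ x' ∈ p.1.1))) := hme'
    rw [not_and_or] at this
    rcases this with h' | h'
    · obtain ⟨p, hp'⟩ := not_forall.mp h'
      rw [Classical.not_imp] at hp'
      obtain ⟨hp, hiff⟩ := hp'
      refine ⟨p, hp, ?_⟩
      rcases hmemb p hp with hc | hc | hc | hc | hc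
      · exact Or.inl hc
      · exact absurd (iff_of_true hc.1 hc.2.2.2) hiff
      · exact absurd (iff_of_false hc.1 hc.2.2.2) hiff
      · exact Or.inr hc
      · exact absurd (iff_of_false hc.1 hc.2.2.2) hiff
    · obtain ⟨p, hp'⟩ := not_forall.mp h'
      rw [Classical.not_imp] at hp'
      obtain ⟨hp, hiff⟩ := hp'
      refine ⟨p, hp, ?_⟩
      rcases hmemb p hp with hc | hc | hc | hc | hc
      · exact Or.inl hc
      · exact absurd (iff_of_false hc.2.1 hc.2.2.1) hiff
      · exact absurd (iff_of_true hc.2.1 hc.2.2.1) hiff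
      · exact Or.inr hc
      · exact absurd (iff_of_false hc.2.1 hc.2.2.1) hiff
  obtain ⟨p₁, hp₁, hmix1⟩ := hmix
  obtain ⟨p₂, hp₂, halign1⟩ := halign
  have husym := crRel_symm h
  have hpFsym : ∀ p ∈ F, p.1 ≠ v ∧ p.1 ≠ u := fun p hp => ⟨(hpF p hp).2, (hpF p hp).1⟩
  rcases hmix1 with ⟨hm1, hm2, hm3, hm4⟩ | ⟨hm1, hm2, hm3, hm4⟩ <;>
    rcases halign1 with ⟨ha1, ha2, ha3, ha4⟩ | ⟨ha1, ha2, ha3, ha4⟩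
  · -- mixedL & alignedL : z = x, A = y', B = x', w0 = y  (type 1)
    have hzA : x ≠ y' := by intro hcc; rw [hcc] at ha1; exact ha4 ha1
    have hzB : x ≠ x' := by intro hcc; rw [hcc] at hm1; exact hm3 hm1
    have hAB : y' ≠ x' := by intro hcc; rw [hcc] at hm4; exact hm3 hm4
    have hwA : y ≠ y' := by intro hcc; rw [hcc] at hm2; exact hm2 hm4
    have hwB : y ≠ x' := by intro hcc; rw [hcc] at ha2; exact ha2 ha3
    have hS : p₁.1.1 = {x, y'} := eq_pair_of_mem p₁.1.2 hm1 hm4 hzA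
    have hT : p₂.1.1 = {x, x'} := eq_pair_of_mem p₂.1.2 ha1 ha3 hzB
    exact config_contra h hpF ⟨p₁, hp₁, rfl⟩ ⟨p₂, hp₂, rfl⟩ hS hT
      hAB hzA hzB (Ne.symm hxy) hwA hwB hu (by rw [hv]; exact Finset.pair_comm x' y')
  · -- mixedL & alignedR : z = y', A = x, B = y, w0 = x'  (type 2)
    have hzA : y' ≠ x := by intro hcc; rw [hcc] at ha4; exact ha1 ha4
    have hzB : y' ≠ y := by intro hcc; rw [hcc] at hm4; exact hm2 hm4
    have hwA : x' ≠ x := by intro hcc; rw [hcc] at hm3; exact hm3 hm1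
    have hwB : x' ≠ y := by intro hcc; rw [hcc] at ha3; exact ha3 ha2
    have hS : p₁.1.1 = {y', x} := eq_pair_of_mem p₁.1.2 hm4 hm1 hzA
    have hT : p₂.1.1 = {y', y} := eq_pair_of_mem p₂.1.2 ha4 ha2 hzB
    obtain ⟨σ, h1, h2, h3⟩ := config_contra husym hpFsym ⟨p₁, hp₁, rfl⟩ ⟨p₂, hp₂, rfl⟩
      hS hT hxy hzA hzB hxy' hwA hwB
      (by rw [hv]; exact Finset.pair_comm x' y') hu
    refine ⟨σ.symm, ?_, ?_, ?_⟩
    · intro a b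
      have := h1 (σ.symm a) (σ.symm b)
      simpa using this.symm
    · intro p hp
      exact (Equiv.symm_apply_eq σ).mpr (h2 p hp).symm
    · exact (Equiv.symm_apply_eq σ).mpr h3.symm
  · -- mixedR & alignedL : z = x', A = y, B = x, w0 = y'  (type 2)
    have hzA : x' ≠ y := by intro hcc; rw [hcc] at ha3; exact ha2 ha3
    have hzB : x' ≠ x := by intro hcc; rw [hcc] at hm3; exact hm1 hm3
    have hwA : y' ≠ y := by intro hcc; rw [hcc] at hm4; exact hm4 hm2
    have hwB : y' ≠ x := by intro hcc; rw [hcc] at ha4; exact ha4 ha1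
    have hS : p₁.1.1 = {x', y} := eq_pair_of_mem p₁.1.2 hm3 hm2 hzA
    have hT : p₂.1.1 = {x', x} := eq_pair_of_mem p₂.1.2 ha3 ha1 hzB
    obtain ⟨σ, h1, h2, h3⟩ := config_contra husym hpFsym ⟨p₁, hp₁, rfl⟩ ⟨p₂, hp₂, rfl⟩
      hS hT (Ne.symm hxy) hzA hzB (Ne.symm hxy') hwA hwB
      hv (by rw [hu]; exact Finset.pair_comm x y)
    refine ⟨σ.symm, ?_, ?_, ?_⟩
    · intro a b
      have := h1 (σ.symm a) (σ.symm b)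
      simpa using this.symm
    · intro p hp
      exact (Equiv.symm_apply_eq σ).mpr (h2 p hp).symm
    · exact (Equiv.symm_apply_eq σ).mpr h3.symm
  · -- mixedR & alignedR : z = y, A = x', B = y', w0 = x  (type 1)
    have hAB : x' ≠ y' := by intro hcc; rw [hcc] at hm3; exact hm4 hm3
    have hzA : y ≠ x' := by intro hcc; rw [hcc] at ha2; exact ha3 ha2
    have hzB : y ≠ y' := by intro hcc; rw [hcc] at hm2; exact hm4 hm2
    have hwA : x ≠ x' := by intro hcc; rw [hcc] at hm1; exact hm1 hm3
    have hwB : x ≠ y' := by intro hcc; rw [hcc] at ha1; exact ha1 ha4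
    have hS : p₁.1.1 = {y, x'} := eq_pair_of_mem p₁.1.2 hm2 hm3 hzA
    have hT : p₂.1.1 = {y, y'} := eq_pair_of_mem p₂.1.2 ha2 ha4 hzB
    exact config_contra h hpF ⟨p₁, hp₁, rfl⟩ ⟨p₂, hp₂, rfl⟩ hS hT
      hAB hzA hzB hxy hwA hwB (by rw [hu]; exact Finset.pair_comm x y) hv

end JohnsonStar
set_option maxHeartbeats 1000000 in
theorem johnson_tinhofer (n : ℕ) : Tinhofer (johnson n) := by
  intro W _W H F hrun hterm
  constructor
  · exact iso_of_output
  · rintro ⟨φ0⟩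
    have inv : ∀ j, j ≤ F.length →
        ∃ ψ : johnson n ≃g H, ∀ p ∈ F.take j, ψ p.1 = p.2 := by
      intro j
      induction j with
      | zero => exact fun _ => ⟨φ0, by simp⟩
      | succ j ih =>
        intro hj
        have hjlt : j < F.length := hj
        obtain ⟨ψ, hψ⟩ := ih (Nat.le_of_lt hjlt)
        have hstep := hrun ⟨j, hjlt⟩
        set p := F.get ⟨j, hjlt⟩ with hpdef
        have hrel : tinRel (johnson n) H (F.take j) (Sum.inl p.1) (Sum.inr p.2) :=
          hstep.2.1
        have hkey : crRel (johnson n ⊕g H) (tinColor (F.take j)) 2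
            (Sum.inl p.1) (Sum.inl (ψ.symm p.2)) := by
          have h1 := hrel 2
          have h2 := crRel_isoSwap ψ hψ 2 (Sum.inr p.2)
          rw [isoSwap_inr] at h2
          exact crRel_trans h1 h2
        obtain ⟨σ, hσauto, hσfix, hσmap⟩ := johnson_star (F.take j) hkey
        have hσIso : ∃ e : johnson n ≃g johnson n, ∀ a, e a = σ a :=
          ⟨⟨σ, fun {a b} => hσauto a b⟩, fun a => rfl⟩
        obtain ⟨e, he⟩ := hσIso
        refine ⟨e.trans ψ, ?_⟩
        intro q hq
        rw [List.take_succ] at hq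
        rcases List.mem_append.mp hq with hq1 | hq2
        · have : (e.trans ψ) q.1 = ψ (σ q.1) := by
            show ψ (e q.1) = ψ (σ q.1)
            rw [he]
          rw [this, hσfix q hq1]
          exact hψ q hq1
        · have hqp : q = p := by
            have hget : F[j]? = some p := by
              rw [List.getElem?_eq_getElem hjlt]
              rfl
            rw [hget] at hq2
            simpa using hq2
          have h5 : (e.trans ψ) p.1 = ψ (σ p.1) := by
            show ψ (e p.1) = ψ (σ p.1)
            rw [he]
          rw [hqp, h5, hσmap]
          exact ψ.apply_symm_apply p.2
    obtain ⟨ψF, hψF⟩ := inv F.length le_rfl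
    rw [List.take_length] at hψF
    have hind : tinIndist (johnson n) H F := inv_tinIndist ψF hψF
    rcases hterm with hbad | hsing
    · exact absurd hind hbad
    · exact output_of_indist_singletons hind hsing

end ColorRef
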